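/- Let X ~ N(0,1), Z ~ N(0,1) independent, λ > 0, and condition on S = {|X + Z| > λ}. Define the Rao–Blackwellized residual u = X − (φ(−λ+X) − φ(−λ−X))/(Φ(−λ+X) + Φ(−λ−X)). Then for every even integer n ≥ 2, E[u^n | S] ≤ ((1/√(2π))/(2Φ(−λ)))^n + (1/(2Φ(−λ/√2)))·E[Y^n] where Y ~ N(0,1); consequently there exists K' > 0 (depending on λ) such that (E[u^n | S])^{1/n} ≤ K'·√n for all n ≥ 1, i.e., u is sub-Gaussian conditional on selection. -/

import Mathlib

open MeasureTheory ProbabilityTheory Real Set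
open scoped NNReal ENNReal

/-- Standard normal pdf. -/
noncomputable def stdPdf (x : ℝ) : ℝ := Real.exp (-(x ^ 2) / 2) / Real.sqrt (2 * Real.pi)

/-- Standard normal cdf. -/
noncomputable def stdCdf (x : ℝ) : ℝ := ∫ t in Set.Iic x, stdPdf t

lemma stdPdf_eq (x : ℝ) : stdPdf x = gaussianPDFReal 0 1 x := by
  simp [stdPdf, gaussianPDFReal, div_eq_inv_mul, mul_comm]

lemma stdPdf_pos (x : ℝ) : 0 < stdPdf x := by
  rw [stdPdf_eq]; exact gaussianPDFReal_pos 0 1 x one_ne_zero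

lemma stdPdf_nonneg (x : ℝ) : 0 ≤ stdPdf x := (stdPdf_pos x).le

lemma sqrt_two_pi_pos : (0:ℝ) < Real.sqrt (2 * Real.pi) :=
  Real.sqrt_pos.mpr (by positivity)

lemma stdPdf_le (x : ℝ) : stdPdf x ≤ 1 / Real.sqrt (2 * Real.pi) := by
  unfold stdPdf
  rw [div_le_div_iff_of_pos_right sqrt_two_pi_pos]
  rw [Real.exp_le_one_iff]
  have : (0:ℝ) ≤ x ^ 2 := sq_nonneg x
  linarith

lemma stdPdf_anti {a b : ℝ} (h : |a| ≤ |b|) : stdPdf b ≤ stdPdf a := by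
  unfold stdPdf
  rw [div_le_div_iff_of_pos_right sqrt_two_pi_pos, Real.exp_le_exp]
  have h2 : a ^ 2 ≤ b ^ 2 := by
    rw [← sq_abs a, ← sq_abs b]; exact pow_le_pow_left₀ (abs_nonneg a) h 2
  linarith

lemma stdPdf_neg (x : ℝ) : stdPdf (-x) = stdPdf x := by simp [stdPdf]

lemma continuous_stdPdf : Continuous stdPdf := by
  unfold stdPdf; fun_prop

lemma integrable_stdPdf : Integrable stdPdf := by
  have := integrable_gaussianPDFReal 0 1
  simpa [funext stdPdf_eq] using this

lemma stdCdf_pos (x : ℝ) : 0 < stdCdf x := by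
  rw [stdCdf]
  rw [setIntegral_pos_iff_support_of_nonneg_ae
    (Filter.Eventually.of_forall fun t => stdPdf_nonneg t) integrable_stdPdf.integrableOn]
  have : Function.support stdPdf = Set.univ := by
    ext t; simp [Function.support, (stdPdf_pos t).ne']
  rw [this, Set.univ_inter]
  simp [Real.volume_Iic]

lemma monotone_stdCdf : Monotone stdCdf := by
  intro a b hab
  exact setIntegral_mono_set integrable_stdPdf.integrableOn
    (Filter.Eventually.of_forall fun t => stdPdf_nonneg t)
    (HasSubset.Subset.eventuallyLE (Set.Iic_subset_Iic.mpr hab))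

lemma measurable_stdCdf : Measurable stdCdf := monotone_stdCdf.measurable

lemma stdCdf_add_intervalIntegral {a b : ℝ} (hab : a ≤ b) :
    stdCdf b = stdCdf a + ∫ t in a..b, stdPdf t := by
  rw [intervalIntegral.integral_of_le hab, stdCdf, stdCdf]
  rw [← setIntegral_union (Set.Iic_disjoint_Ioc le_rfl) measurableSet_Ioc
    integrable_stdPdf.integrableOn integrable_stdPdf.integrableOn]
  rw [Set.Iic_union_Ioc_eq_Iic hab]

/-- correction function -/
noncomputable def gfun (lam x : ℝ) : ℝ :=
  (stdPdf (-lam + x) - stdPdf (-lam - x)) / (stdCdf (-lam + x) + stdCdf (-lam - x))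

noncomputable def Bconst (lam : ℝ) : ℝ := (1 / Real.sqrt (2 * Real.pi)) / (2 * stdCdf (-lam))

lemma Bconst_pos (lam : ℝ) : 0 < Bconst lam := by
  unfold Bconst
  have := stdCdf_pos (-lam)
  have := sqrt_two_pi_pos
  positivity

lemma den_pos (lam x : ℝ) : 0 < stdCdf (-lam + x) + stdCdf (-lam - x) :=
  add_pos (stdCdf_pos _) (stdCdf_pos _)

lemma measurable_gfun (lam : ℝ) : Measurable (gfun lam) := by
  unfold gfun
  exact ((continuous_stdPdf.measurable.comp (measurable_const.add measurable_id)).sub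
    (continuous_stdPdf.measurable.comp (measurable_const.sub measurable_id))).div
    ((measurable_stdCdf.comp (measurable_const.add measurable_id)).add
    (measurable_stdCdf.comp (measurable_const.sub measurable_id)))

lemma gfun_neg (lam x : ℝ) : gfun lam (-x) = - gfun lam x := by
  unfold gfun
  have h1 : -lam + -x = -lam - x := by ring
  have h2 : -lam - -x = -lam + x := by ring
  rw [h1, h2, ← neg_div]
  ring_nf

lemma num_nonneg {lam x : ℝ} (hlam : 0 < lam) (hx : 0 ≤ x) :
    0 ≤ stdPdf (-lam + x) - stdPdf (-lam - x) := by
  have : stdPdf (-lam - x) ≤ stdPdf (-lam + x) := by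
    apply stdPdf_anti
    have habs : |(-lam - x)| = lam + x := by
      rw [show -lam - x = -(lam+x) by ring, abs_neg, abs_of_nonneg (by linarith)]
    rw [habs, abs_le]
    constructor <;> linarith
  linarith

lemma den_ge {lam x : ℝ} (hlam : 0 < lam) (hx : 0 ≤ x) :
    2 * stdCdf (-lam) ≤ stdCdf (-lam + x) + stdCdf (-lam - x) := by
  -- stdCdf(-lam+x) - stdCdf(-lam) ≥ stdCdf(-lam) - stdCdf(-lam-x)
  have h1 : stdCdf (-lam + x) = stdCdf (-lam) + ∫ t in (-lam)..(-lam + x), stdPdf t :=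
    stdCdf_add_intervalIntegral (by linarith)
  have h2 : stdCdf (-lam) = stdCdf (-lam - x) + ∫ t in (-lam - x)..(-lam), stdPdf t :=
    stdCdf_add_intervalIntegral (by linarith)
  have key : (∫ t in (-lam - x)..(-lam), stdPdf t) ≤ ∫ t in (-lam)..(-lam + x), stdPdf t := by
    have hsub : (∫ t in (-lam)..(-lam + x), stdPdf (-(2*lam) - t))
        = ∫ t in (-lam - x)..(-lam), stdPdf t := by
      rw [intervalIntegral.integral_comp_sub_left stdPdf (-(2*lam))]
      norm_num
      ring_nf
    rw [← hsub]
    apply intervalIntegral.integral_mono_on (by linarith)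
    · exact (continuous_stdPdf.comp (continuous_const.sub continuous_id)).intervalIntegrable _ _
    · exact continuous_stdPdf.intervalIntegrable _ _
    · intro t ht
      obtain ⟨ht1, ht2⟩ := ht
      apply stdPdf_anti
      rw [abs_le]
      have h3 : |(-(2*lam) - t)| = 2*lam + t := by
        rw [abs_eq (by linarith)]
        right; ring
      rw [h3]
      constructor <;> [linarith; linarith]
  linarith

lemma gfun_nonneg {lam x : ℝ} (hlam : 0 < lam) (hx : 0 ≤ x) : 0 ≤ gfun lam x :=
  div_nonneg (num_nonneg hlam hx) (den_pos lam x).le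

lemma gfun_le {lam x : ℝ} (hlam : 0 < lam) (hx : 0 ≤ x) : gfun lam x ≤ Bconst lam := by
  unfold gfun Bconst
  apply div_le_div₀ (by positivity)
  · have := stdPdf_nonneg (-lam - x)
    have := stdPdf_le (-lam + x)
    linarith
  · have := stdCdf_pos (-lam); linarith
  · exact den_ge hlam hx

lemma gfun_abs_le {lam : ℝ} (hlam : 0 < lam) (x : ℝ) : |gfun lam x| ≤ Bconst lam := by
  rcases le_or_gt 0 x with hx | hx
  · rw [abs_of_nonneg (gfun_nonneg hlam hx)]; exact gfun_le hlam hx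
  · have hx' : 0 ≤ -x := by linarith
    have ha : 0 ≤ -gfun lam x := by rw [← gfun_neg]; exact gfun_nonneg hlam hx'
    have hb : -gfun lam x ≤ Bconst lam := by rw [← gfun_neg]; exact gfun_le hlam hx'
    rw [abs_le]
    constructor <;> linarith [Bconst_pos lam]

lemma u_abs_le_max_of_nonneg {lam x : ℝ} (hlam : 0 < lam) (hx : 0 ≤ x) :
    |x - gfun lam x| ≤ max (Bconst lam) |x| := by
  rcases le_or_gt (gfun lam x) x with h | h
  · rw [abs_of_nonneg (by linarith)]
    refine le_max_of_le_right ?_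
    rw [abs_of_nonneg hx]
    have := gfun_nonneg hlam hx
    linarith
  · rw [abs_of_neg (by linarith)]
    refine le_max_of_le_left ?_
    have := gfun_le hlam hx
    linarith

lemma u_abs_le_max {lam : ℝ} (hlam : 0 < lam) (x : ℝ) :
    |x - gfun lam x| ≤ max (Bconst lam) |x| := by
  rcases le_or_gt 0 x with hx | hx
  · exact u_abs_le_max_of_nonneg hlam hx
  · have hx' : (0:ℝ) ≤ -x := by linarith
    have h := u_abs_le_max_of_nonneg hlam hx'
    have heq : (-x) - gfun lam (-x) = -(x - gfun lam x) := by
      rw [gfun_neg]; ring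
    rw [heq, abs_neg, abs_neg] at h
    exact h

lemma pointwise_even {lam : ℝ} (hlam : 0 < lam) {n : ℕ} (hn : Even n) (x : ℝ) :
    (x - gfun lam x) ^ n ≤ Bconst lam ^ n + x ^ n := by
  rw [← hn.pow_abs (x - gfun lam x), ← hn.pow_abs x]
  have h1 : |x - gfun lam x| ^ n ≤ (max (Bconst lam) |x|) ^ n :=
    pow_le_pow_left₀ (abs_nonneg _) (u_abs_le_max hlam x) n
  refine h1.trans ?_
  rcases max_cases (Bconst lam) |x| with ⟨heq, _⟩ | ⟨heq, _⟩ <;> rw [heq]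
  · have : (0:ℝ) ≤ |x| ^ n := pow_nonneg (abs_nonneg x) n
    linarith
  · have : (0:ℝ) ≤ Bconst lam ^ n := pow_nonneg (Bconst_pos lam).le n
    linarith

lemma u_abs_le {lam : ℝ} (hlam : 0 < lam) (x : ℝ) :
    |x - gfun lam x| ≤ Bconst lam + |x| := by
  refine (abs_sub _ _).trans ?_
  have := gfun_abs_le hlam x
  linarith

lemma sqrt4pi_mul_sqrtpi : Real.sqrt (2 * Real.pi * 2) * Real.sqrt (2 * Real.pi * (1/2)) = 2 * Real.pi := by
  rw [← Real.sqrt_mul (by positivity)]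
  rw [show 2 * Real.pi * 2 * (2 * Real.pi * (1/2)) = (2 * Real.pi)^2 by ring]
  exact Real.sqrt_sq (by positivity)

/-- pointwise convolution identity for gaussian densities -/
lemma gauss_conv_pointwise (y x : ℝ) :
    gaussianPDFReal 0 1 x * gaussianPDFReal x 1 y
      = gaussianPDFReal 0 2 y * gaussianPDFReal (y/2) (NNReal.mk (1/2) (by norm_num)) x := by
  unfold gaussianPDFReal
  simp only [NNReal.coe_ofNat, NNReal.coe_mk, NNReal.coe_one]
  rw [mul_mul_mul_comm, mul_mul_mul_comm _ (rexp _)]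
  congr 1
  · rw [← mul_inv, ← mul_inv]
    congr 1
    rw [sqrt4pi_mul_sqrtpi, show (2:ℝ) * π * 1 = 2 * π by ring, Real.mul_self_sqrt (by positivity)]
  · rw [← Real.exp_add, ← Real.exp_add]
    congr 1
    ring

lemma half_ne_zero' : (NNReal.mk (1/2) (by norm_num) : ℝ≥0) ≠ 0 :=
  NNReal.coe_ne_zero.mp (by norm_num)

lemma gauss_conv_inner (y : ℝ) :
    ∫⁻ x, gaussianPDF 0 1 x * gaussianPDF x 1 y = gaussianPDF 0 2 y := by
  unfold gaussianPDF
  have hpt : ∀ x : ℝ, ENNReal.ofReal (gaussianPDFReal 0 1 x)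
      * ENNReal.ofReal (gaussianPDFReal x 1 y)
      = ENNReal.ofReal (gaussianPDFReal 0 2 y
          * gaussianPDFReal (y/2) (NNReal.mk (1/2) (by norm_num)) x) := fun x => by
    rw [← ENNReal.ofReal_mul (gaussianPDFReal_nonneg 0 1 x), gauss_conv_pointwise]
  simp_rw [hpt]
  rw [← ofReal_integral_eq_lintegral_ofReal ((integrable_gaussianPDFReal _ _).const_mul _)
    (ae_of_all _ fun x => mul_nonneg (gaussianPDFReal_nonneg _ _ _)
      (gaussianPDFReal_nonneg _ _ _))]
  rw [integral_const_mul, integral_gaussianPDFReal_eq_one _ half_ne_zero', mul_one]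

lemma gauss_conv_map :
    Measure.map (fun p : ℝ × ℝ => p.1 + p.2)
      ((gaussianReal 0 1).prod (gaussianReal 0 1)) = gaussianReal 0 2 := by
  ext s hs
  rw [Measure.map_apply (by fun_prop : Measurable fun p : ℝ × ℝ => p.1 + p.2) hs]
  rw [Measure.prod_apply ((by fun_prop : Measurable fun p : ℝ × ℝ => p.1 + p.2) hs)]
  have hslice : ∀ x : ℝ, (gaussianReal 0 1) (Prod.mk x ⁻¹' ((fun p : ℝ × ℝ => p.1 + p.2) ⁻¹' s))
      = ∫⁻ y in s, gaussianPDF x 1 y := by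
    intro x
    have h0 : (Prod.mk x ⁻¹' ((fun p : ℝ × ℝ => p.1 + p.2) ⁻¹' s)) = (x + ·) ⁻¹' s := rfl
    rw [h0, ← Measure.map_apply (measurable_const_add x) hs, gaussianReal_map_const_add x,
      zero_add]
    exact gaussianReal_apply x one_ne_zero s
  simp_rw [hslice]
  have hmeas2 : Measurable (fun p : ℝ × ℝ => gaussianPDF p.1 1 p.2) := by
    apply Measurable.ennreal_ofReal
    unfold gaussianPDFReal
    fun_prop
  have hinner : Measurable fun x : ℝ => ∫⁻ y in s, gaussianPDF x 1 y :=
    Measurable.lintegral_prod_right' hmeas2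
  have hm : Measurable (gaussianPDF 0 1) := (measurable_gaussianPDFReal 0 1).ennreal_ofReal
  rw [gaussianReal_of_var_ne_zero 0 one_ne_zero,
    lintegral_withDensity_eq_lintegral_mul _ hm hinner]
  simp only [Pi.mul_apply]
  have hpull : ∀ x : ℝ, gaussianPDF 0 1 x * ∫⁻ y in s, gaussianPDF x 1 y
      = ∫⁻ y in s, gaussianPDF 0 1 x * gaussianPDF x 1 y := fun x =>
    (lintegral_const_mul' _ _ ENNReal.ofReal_ne_top).symm
  simp_rw [hpull]
  rw [lintegral_lintegral_swap]
  · simp_rw [gauss_conv_inner]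
    exact (gaussianReal_apply 0 two_ne_zero s).symm
  · have hm : Measurable (gaussianPDF 0 1) := (measurable_gaussianPDFReal 0 1).ennreal_ofReal
    exact ((hm.comp measurable_fst).mul hmeas2).aemeasurable

lemma pdf2_even (y : ℝ) : gaussianPDFReal 0 2 (-y) = gaussianPDFReal 0 2 y := by
  unfold gaussianPDFReal
  rw [show (-y - 0)^2 = (y - 0)^2 by ring]

lemma sqrt_two_pos : (0:ℝ) < Real.sqrt 2 := Real.sqrt_pos.mpr (by norm_num)

lemma pdf2_scale (x : ℝ) :
    Real.sqrt 2 * gaussianPDFReal 0 2 (Real.sqrt 2 * x) = stdPdf x := by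
  unfold gaussianPDFReal stdPdf
  rw [NNReal.coe_ofNat]
  have e1 : (Real.sqrt 2 * x - 0)^2 = 2 * x^2 := by
    rw [sub_zero, mul_pow, Real.sq_sqrt (by norm_num : (0:ℝ) ≤ 2)]
  rw [e1, show -(2 * x^2)/(2*2) = -(x^2)/2 by ring]
  have e2 : Real.sqrt (2*π*2) = Real.sqrt 2 * Real.sqrt (2*π) := by
    rw [← Real.sqrt_mul (by norm_num : (0:ℝ) ≤ 2) (2*π)]
    ring_nf
  rw [e2]
  have h2 := sqrt_two_pos.ne'
  have h2p := sqrt_two_pi_pos.ne'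
  field_simp

lemma tail_half (lam : ℝ) :
    ∫ y in Ioi lam, gaussianPDFReal 0 2 y = stdCdf (-lam / Real.sqrt 2) := by
  have hchg := integral_comp_mul_left_Ioi (gaussianPDFReal 0 2) (lam / Real.sqrt 2) sqrt_two_pos
  rw [show Real.sqrt 2 * (lam / Real.sqrt 2) = lam by field_simp] at hchg
  have h1 : ∫ y in Ioi lam, gaussianPDFReal 0 2 y
      = ∫ x in Ioi (lam / Real.sqrt 2), Real.sqrt 2 * gaussianPDFReal 0 2 (Real.sqrt 2 * x) := by
    rw [integral_const_mul, hchg, smul_eq_mul, ← mul_assoc,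
      mul_inv_cancel₀ sqrt_two_pos.ne', one_mul]
  rw [h1]
  simp_rw [pdf2_scale]
  rw [stdCdf, show -lam / Real.sqrt 2 = -(lam / Real.sqrt 2) by ring]
  rw [← integral_comp_neg_Ioi]
  simp_rw [stdPdf_neg]

lemma iio_half (lam : ℝ) :
    ∫ y in Iio (-lam), gaussianPDFReal 0 2 y = stdCdf (-lam / Real.sqrt 2) := by
  rw [Measure.restrict_congr_set Iio_ae_eq_Iic]
  have : ∀ y : ℝ, gaussianPDFReal 0 2 y = gaussianPDFReal 0 2 (-y) := fun y => (pdf2_even y).symm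
  rw [integral_congr_ae (Filter.Eventually.of_forall fun y => this y)]
  rw [integral_comp_neg_Iic, neg_neg]
  exact tail_half lam

lemma tail_eq {lam : ℝ} (hlam : 0 < lam) :
    gaussianReal 0 2 {y : ℝ | lam < |y|}
      = ENNReal.ofReal (2 * stdCdf (-lam / Real.sqrt 2)) := by
  have hset : {y : ℝ | lam < |y|} = Iio (-lam) ∪ Ioi lam := by
    ext y
    simp only [mem_setOf_eq, mem_union, mem_Iio, mem_Ioi, lt_abs]
    constructor
    · rintro (h | h); · right; exact h
      · left; linarith
    · rintro (h | h); · right; linarith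
      · left; exact h
  have hdisj : Disjoint (Iio (-lam)) (Ioi lam) := by
    rw [Set.disjoint_left]
    intro y h1 h2
    simp only [mem_Iio, mem_Ioi] at h1 h2
    linarith
  rw [hset, measure_union hdisj measurableSet_Ioi,
    gaussianReal_apply_eq_integral 0 two_ne_zero, gaussianReal_apply_eq_integral 0 two_ne_zero,
    iio_half, tail_half, ← ENNReal.ofReal_add (le_of_lt (stdCdf_pos _)) (le_of_lt (stdCdf_pos _))]
  rw [two_mul]

lemma pow_le_exp_quarter (n : ℕ) (t : ℝ) :
    |t| ^ n ≤ Real.sqrt n ^ n * Real.exp (t ^ 2 / 4) := by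
  rcases Nat.eq_zero_or_pos n with h0 | hn
  · subst h0
    simpa using Real.one_le_exp (by positivity)
  rcases (abs_nonneg t).eq_or_lt with hz | ha
  · rw [← hz, zero_pow hn.ne']
    positivity
  set a := |t| with ha_def
  have hsn : (0:ℝ) < Real.sqrt n := Real.sqrt_pos.mpr (by exact_mod_cast hn)
  have hsq : Real.sqrt n * Real.sqrt n = (n:ℝ) := Real.mul_self_sqrt (Nat.cast_nonneg n)
  have hta : t ^ 2 = a ^ 2 := (sq_abs t).symm
  have key : (a / Real.sqrt n) ^ n ≤ Real.exp (t ^ 2 / 4) := by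
    have h1 : (a / Real.sqrt n) ^ n = Real.exp (n * Real.log (a / Real.sqrt n)) := by
      rw [← Real.log_pow, Real.exp_log (pow_pos (div_pos ha hsn) n)]
    rw [h1, Real.exp_le_exp]
    have hlog : Real.log (a / Real.sqrt n) ≤ a / Real.sqrt n - 1 :=
      Real.log_le_sub_one_of_pos (by positivity)
    have hdiv : (n:ℝ) * (a / Real.sqrt n) = Real.sqrt n * a := by
      field_simp
      nlinarith [hsq]
    have step1 : (n:ℝ) * Real.log (a / Real.sqrt n) ≤ Real.sqrt n * a - n := by
      have := mul_le_mul_of_nonneg_left hlog (Nat.cast_nonneg n)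
      rw [mul_sub, hdiv, mul_one] at this
      linarith
    refine step1.trans ?_
    rw [hta]
    nlinarith [sq_nonneg (a / 2 - Real.sqrt n)]
  calc a ^ n = Real.sqrt n ^ n * (a / Real.sqrt n) ^ n := by
        rw [← mul_pow]
        congr 1
        field_simp
    _ ≤ Real.sqrt n ^ n * Real.exp (t ^ 2 / 4) :=
        mul_le_mul_of_nonneg_left key (pow_nonneg hsn.le n)

lemma pdf_mul_expquarter (x : ℝ) :
    gaussianPDFReal 0 1 x * Real.exp (x ^ 2 / 4)
      = (Real.sqrt (2 * π))⁻¹ * Real.exp (-(1/4) * x ^ 2) := by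
  unfold gaussianPDFReal
  simp only [NNReal.coe_one, mul_one, sub_zero]
  rw [mul_assoc, ← Real.exp_add]
  congr 1
  ring

lemma integrable_pdf_mul_expquarter :
    Integrable (fun x : ℝ => gaussianPDFReal 0 1 x * Real.exp (x ^ 2 / 4)) := by
  have h := (integrable_exp_neg_mul_sq (show (0:ℝ) < 1/4 by norm_num)).const_mul
    (Real.sqrt (2 * π))⁻¹
  exact h.congr (ae_of_all _ fun x => (pdf_mul_expquarter x).symm)

lemma gaussian_eq_withDensity :
    gaussianReal 0 1
      = volume.withDensity (fun x => ((gaussianPDFReal 0 1 x).toNNReal : ℝ≥0∞)) := by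
  rw [gaussianReal_of_var_ne_zero 0 one_ne_zero]
  rfl

lemma measurable_pdf_nnreal : Measurable fun x => (gaussianPDFReal 0 1 x).toNNReal :=
  (measurable_gaussianPDFReal 0 1).real_toNNReal

lemma integrable_gaussian_of {f : ℝ → ℝ}
    (h : Integrable (fun x => gaussianPDFReal 0 1 x * f x)) :
    Integrable f (gaussianReal 0 1) := by
  rw [gaussian_eq_withDensity, integrable_withDensity_iff_integrable_smul measurable_pdf_nnreal]
  exact h.congr (ae_of_all _ fun x => by
    simp [NNReal.smul_def, Real.coe_toNNReal _ (gaussianPDFReal_nonneg 0 1 x)])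

lemma integral_gaussian_eq (f : ℝ → ℝ) :
    ∫ x, f x ∂(gaussianReal 0 1) = ∫ x, gaussianPDFReal 0 1 x * f x := by
  rw [gaussian_eq_withDensity, integral_withDensity_eq_integral_smul measurable_pdf_nnreal]
  congr 1
  funext x
  simp [NNReal.smul_def, Real.coe_toNNReal _ (gaussianPDFReal_nonneg 0 1 x)]

lemma integrable_expquarter_gaussian :
    Integrable (fun x : ℝ => Real.exp (x ^ 2 / 4)) (gaussianReal 0 1) :=
  integrable_gaussian_of integrable_pdf_mul_expquarter

lemma sqrt_two_le_two : Real.sqrt 2 ≤ 2 := by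
  nlinarith [Real.sq_sqrt (show (0:ℝ) ≤ 2 by norm_num), Real.sqrt_nonneg 2]

lemma integral_expquarter_le :
    ∫ x, Real.exp (x ^ 2 / 4) ∂(gaussianReal 0 1) ≤ 2 := by
  rw [integral_gaussian_eq]
  simp_rw [pdf_mul_expquarter]
  rw [integral_const_mul, integral_gaussian]
  have h1 : Real.sqrt (π / (1/4)) = Real.sqrt 2 * Real.sqrt (2 * π) := by
    rw [← Real.sqrt_mul (by norm_num : (0:ℝ) ≤ 2)]
    congr 1
    ring
  rw [h1, mul_comm (Real.sqrt 2), ← mul_assoc, inv_mul_cancel₀ sqrt_two_pi_pos.ne', one_mul]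
  exact sqrt_two_le_two

lemma integrable_abs_pow_gaussian (n : ℕ) :
    Integrable (fun y : ℝ => |y| ^ n) (gaussianReal 0 1) := by
  apply integrable_gaussian_of
  apply Integrable.mono' (integrable_pdf_mul_expquarter.const_mul (Real.sqrt n ^ n))
  · exact ((measurable_gaussianPDFReal 0 1).mul
      (measurable_abs.pow_const n)).aestronglyMeasurable
  · refine ae_of_all _ fun x => ?_
    rw [Real.norm_eq_abs, abs_of_nonneg (mul_nonneg (gaussianPDFReal_nonneg 0 1 x)
      (by positivity))]
    calc gaussianPDFReal 0 1 x * |x| ^ n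
        ≤ gaussianPDFReal 0 1 x * (Real.sqrt n ^ n * Real.exp (x ^ 2 / 4)) :=
          mul_le_mul_of_nonneg_left (pow_le_exp_quarter n x) (gaussianPDFReal_nonneg 0 1 x)
      _ = Real.sqrt n ^ n * (gaussianPDFReal 0 1 x * Real.exp (x ^ 2 / 4)) := by ring

lemma moment_bound (n : ℕ) :
    ∫ y, |y| ^ n ∂(gaussianReal 0 1) ≤ 2 * Real.sqrt n ^ n := by
  have h1 : ∫ y, |y| ^ n ∂(gaussianReal 0 1)
      ≤ ∫ y, Real.sqrt n ^ n * Real.exp (y ^ 2 / 4) ∂(gaussianReal 0 1) := by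
    apply integral_mono (integrable_abs_pow_gaussian n)
      (integrable_expquarter_gaussian.const_mul _)
    exact pow_le_exp_quarter n
  rw [integral_const_mul] at h1
  have h2 := mul_le_mul_of_nonneg_left integral_expquarter_le
    (pow_nonneg (Real.sqrt_nonneg (n:ℝ)) n)
  linarith

lemma rpow_one_div_le {t s : ℝ} {n : ℕ} (hn : 1 ≤ n) (hs : 0 ≤ s) (h : |t| ≤ s ^ n) :
    t ^ ((1:ℝ)/n) ≤ s := by
  have hn0 : (n:ℝ) ≠ 0 := by
    exact_mod_cast Nat.one_le_iff_ne_zero.mp hn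
  have hsn : (s ^ n : ℝ) ^ ((1:ℝ)/n) = s := by
    rw [← Real.rpow_natCast s n, ← Real.rpow_mul hs, mul_one_div, div_self hn0, Real.rpow_one]
  rcases le_or_gt 0 t with ht | ht
  · calc t ^ ((1:ℝ)/n) ≤ (s^n) ^ ((1:ℝ)/n) :=
          Real.rpow_le_rpow ht ((le_abs_self t).trans h) (by positivity)
      _ = s := hsn
  · have habs : (0:ℝ) < |t| := abs_pos.mpr ht.ne
    have h2 : t ^ ((1:ℝ)/n) ≤ |t| ^ ((1:ℝ)/n) := by
      rw [Real.rpow_def_of_neg ht, Real.rpow_def_of_pos habs, ← Real.log_abs t]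
      have hc := Real.cos_le_one ((1:ℝ)/n * π)
      nlinarith [Real.exp_pos (Real.log |t| * ((1:ℝ)/n))]
    calc t ^ ((1:ℝ)/n) ≤ |t| ^ ((1:ℝ)/n) := h2
      _ ≤ (s^n) ^ ((1:ℝ)/n) := Real.rpow_le_rpow habs.le h (by positivity)
      _ = s := hsn

lemma add_pow_le_two_pow {a b : ℝ} (ha : 0 ≤ a) (hb : 0 ≤ b) (n : ℕ) :
    (a + b) ^ n ≤ 2 ^ n * a ^ n + 2 ^ n * b ^ n := by
  have h1 : a + b ≤ 2 * max a b := by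
    rcases max_cases a b with ⟨h, h'⟩ | ⟨h, h'⟩ <;> rw [h] <;> linarith
  calc (a + b) ^ n ≤ (2 * max a b) ^ n :=
        pow_le_pow_left₀ (by linarith) h1 n
    _ = 2 ^ n * (max a b) ^ n := mul_pow 2 (max a b) n
    _ ≤ 2 ^ n * a ^ n + 2 ^ n * b ^ n := by
        rcases max_cases a b with ⟨h, _⟩ | ⟨h, _⟩ <;> rw [h] <;>
          nlinarith [pow_nonneg ha n, pow_nonneg hb n, pow_nonneg (show (0:ℝ) ≤ 2 by norm_num) n]


/-- Sub-Gaussianity of the Rao–Blackwellized residual conditional on selection: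
with `X, Z ~ N(0,1)` independent, `S = {|X + Z| > λ}` and
`u = X − (φ(−λ+X) − φ(−λ−X))/(Φ(−λ+X) + Φ(−λ−X))`, for every even `n ≥ 2`,
`E[uⁿ ∣ S] ≤ ((1/√(2π))/(2Φ(−λ)))ⁿ + (1/(2Φ(−λ/√2)))·E[Yⁿ]` with `Y ~ N(0,1)`;
consequently there is `K' > 0` with `(E[uⁿ ∣ S])^{1/n} ≤ K'·√n` for all `n ≥ 1`. -/
theorem stmt12 {Ω : Type*} [MeasurableSpace Ω] (μ : Measure Ω) [IsProbabilityMeasure μ]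
    (X Z : Ω → ℝ) (lam : ℝ) (hlam : 0 < lam)
    (hX : Measure.map X μ = gaussianReal 0 1)
    (hZ : Measure.map Z μ = gaussianReal 0 1)
    (hind : IndepFun X Z μ) :
    (∀ n : ℕ, 2 ≤ n → Even n →
      ∫ ω, (X ω - (stdPdf (-lam + X ω) - stdPdf (-lam - X ω)) /
              (stdCdf (-lam + X ω) + stdCdf (-lam - X ω))) ^ n
          ∂(ProbabilityTheory.cond μ {ω | lam < |X ω + Z ω|})
        ≤ ((1 / Real.sqrt (2 * Real.pi)) / (2 * stdCdf (-lam))) ^ n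
          + (1 / (2 * stdCdf (-lam / Real.sqrt 2))) * ∫ y, y ^ n ∂(gaussianReal 0 1)) ∧
    ∃ K' : ℝ, 0 < K' ∧ ∀ n : ℕ, 1 ≤ n →
      (∫ ω, (X ω - (stdPdf (-lam + X ω) - stdPdf (-lam - X ω)) /
              (stdCdf (-lam + X ω) + stdCdf (-lam - X ω))) ^ n
          ∂(ProbabilityTheory.cond μ {ω | lam < |X ω + Z ω|})) ^ ((1 : ℝ) / n)
        ≤ K' * Real.sqrt n := by
  have hγ : (gaussianReal 0 1 : Measure ℝ) ≠ 0 := IsProbabilityMeasure.ne_zero _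
  have hXm : AEMeasurable X μ := by
    by_contra hc
    rw [Measure.map_of_not_aemeasurable hc] at hX
    exact hγ hX.symm
  have hZm : AEMeasurable Z μ := by
    by_contra hc
    rw [Measure.map_of_not_aemeasurable hc] at hZ
    exact hγ hZ.symm
  set S : Set Ω := {ω | lam < |X ω + Z ω|} with hS_def
  set B : ℝ := (1 / Real.sqrt (2 * Real.pi)) / (2 * stdCdf (-lam)) with hB_def
  have hBB : B = Bconst lam := rfl
  have hBpos : 0 < B := hBB ▸ Bconst_pos lam
  set u : ℝ → ℝ := fun x => x - gfun lam x with hu_def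
  have hu_meas : Measurable u := measurable_id.sub (measurable_gfun lam)
  have hmapsum : Measure.map (fun ω => X ω + Z ω) μ = gaussianReal 0 2 := by
    have hpair : Measure.map (fun ω => (X ω, Z ω)) μ
        = (gaussianReal 0 1).prod (gaussianReal 0 1) := by
      have h := (indepFun_iff_map_prod_eq_prod_map_map hXm hZm).mp hind
      rw [hX, hZ] at h
      exact h
    have hcomp : (fun ω => X ω + Z ω)
        = (fun p : ℝ × ℝ => p.1 + p.2) ∘ (fun ω => (X ω, Z ω)) := rfl
    rw [hcomp, ← AEMeasurable.map_map_of_aemeasurable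
      (by fun_prop : Measurable fun p : ℝ × ℝ => p.1 + p.2).aemeasurable (hXm.prodMk hZm), hpair, gauss_conv_map]
  have hAmeas : MeasurableSet {y : ℝ | lam < |y|} :=
    measurableSet_lt measurable_const continuous_abs.measurable
  have hμS : μ S = ENNReal.ofReal (2 * stdCdf (-lam / Real.sqrt 2)) := by
    have hSpre : S = (fun ω => X ω + Z ω) ⁻¹' {y : ℝ | lam < |y|} := rfl
    rw [hSpre, ← Measure.map_apply_of_aemeasurable (by fun_prop : AEMeasurable (fun ω => X ω + Z ω) μ) hAmeas, hmapsum, tail_eq hlam]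
  set R : ℝ := 2 * stdCdf (-lam / Real.sqrt 2) with hR_def
  have hRpos : 0 < R := by
    have := stdCdf_pos (-lam / Real.sqrt 2)
    rw [hR_def]; linarith
  have hcondS : ProbabilityTheory.cond μ S = (ENNReal.ofReal R)⁻¹ • μ.restrict S := by
    rw [ProbabilityTheory.cond, hμS]
  have htoReal : ((ENNReal.ofReal R)⁻¹).toReal = R⁻¹ := by
    rw [ENNReal.toReal_inv, ENNReal.toReal_ofReal hRpos.le]
  clear_value B R
  -- integrability facts
  have hXint_absn : ∀ n : ℕ, Integrable (fun ω => |X ω| ^ n) μ := by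
    intro n
    have hasm : AEStronglyMeasurable (fun y : ℝ => |y| ^ n) (Measure.map X μ) := by
      rw [hX]; exact (measurable_abs.pow_const n).aestronglyMeasurable
    have h := (integrable_map_measure hasm hXm).mp (by
      rw [hX]; exact integrable_abs_pow_gaussian n)
    exact h
  have hXintegral : ∀ n : ℕ, ∫ ω, |X ω| ^ n ∂μ = ∫ y, |y| ^ n ∂(gaussianReal 0 1) := by
    intro n
    have hasm : AEStronglyMeasurable (fun y : ℝ => |y| ^ n) (Measure.map X μ) := by
      rw [hX]; exact (measurable_abs.pow_const n).aestronglyMeasurable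
    conv_rhs => rw [← hX]
    exact (integral_map hXm hasm).symm
  have hdom : ∀ n : ℕ, Integrable (fun ω => (B + |X ω|) ^ n) μ := by
    intro n
    apply Integrable.mono' ((integrable_const (2^n * B^n)).add ((hXint_absn n).const_mul (2^n)))
    · exact ((aemeasurable_const.add (measurable_abs.comp_aemeasurable hXm)).pow_const
        n).aestronglyMeasurable
    · refine ae_of_all _ fun ω => ?_
      rw [Real.norm_eq_abs, abs_of_nonneg (by positivity)]
      exact add_pow_le_two_pow hBpos.le (abs_nonneg _) n
  have hdomint : ∀ n : ℕ, ∫ ω, (B + |X ω|) ^ n ∂μ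
      ≤ 2 ^ n * B ^ n + 2 ^ n * (2 * Real.sqrt n ^ n) := by
    intro n
    have hasm : AEStronglyMeasurable (fun y : ℝ => (B + |y|) ^ n) (Measure.map X μ) := by
      rw [hX]; exact ((measurable_const.add measurable_abs).pow_const n).aestronglyMeasurable
    have h4 : ∫ ω, (B + |X ω|) ^ n ∂μ = ∫ y, (B + |y|) ^ n ∂(gaussianReal 0 1) := by
      conv_rhs => rw [← hX]
      exact (integral_map hXm hasm).symm
    rw [h4]
    have hint2 : Integrable (fun y : ℝ => 2^n * B^n + 2^n * |y|^n) (gaussianReal 0 1) :=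
      (integrable_const (2^n * B^n)).add ((integrable_abs_pow_gaussian n).const_mul (2^n))
    have hint1 : Integrable (fun y : ℝ => (B + |y|) ^ n) (gaussianReal 0 1) := by
      apply Integrable.mono' hint2
      · exact ((measurable_const.add measurable_abs).pow_const n).aestronglyMeasurable
      · refine ae_of_all _ fun y => ?_
        rw [Real.norm_eq_abs, abs_of_nonneg (by positivity)]
        exact add_pow_le_two_pow hBpos.le (abs_nonneg _) n
    have h5 : ∫ y, (B + |y|) ^ n ∂(gaussianReal 0 1)
        ≤ ∫ y, (2^n * B^n + 2^n * |y|^n) ∂(gaussianReal 0 1) :=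
      integral_mono hint1 hint2 (fun y => add_pow_le_two_pow hBpos.le (abs_nonneg _) n)
    have h6 : ∫ y, (2^n * B^n + 2^n * |y|^n) ∂(gaussianReal 0 1)
        = 2^n * B^n + 2^n * ∫ y, |y|^n ∂(gaussianReal 0 1) := by
      rw [integral_add (integrable_const _) ((integrable_abs_pow_gaussian n).const_mul (2^n)),
        integral_const, integral_const_mul]
      simp
    have h7 := mul_le_mul_of_nonneg_left (moment_bound n)
      (pow_nonneg (show (0:ℝ) ≤ 2 by norm_num) n)
    linarith
  constructor
  · -- Part 1
    intro n hn2 hne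
    have hnz : n ≠ 0 := by omega
    show ∫ ω, (u (X ω)) ^ n ∂(ProbabilityTheory.cond μ S)
        ≤ B ^ n + (1 / R) * ∫ y, y ^ n ∂(gaussianReal 0 1)
    rw [hcondS, integral_smul_measure, htoReal, smul_eq_mul]
    have hpt : ∀ ω, (u (X ω)) ^ n ≤ B ^ n + |X ω| ^ n := by
      intro ω
      have h := pointwise_even hlam hne (X ω)
      rwa [← hne.pow_abs (X ω), ← hBB] at h
    have hGint : Integrable (fun ω => B ^ n + |X ω| ^ n) (μ.restrict S) :=
      ((integrable_const (B ^ n)).add (hXint_absn n)).restrict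
    have hFasm : AEStronglyMeasurable (fun ω => (u (X ω)) ^ n) (μ.restrict S) :=
      (((hu_meas.comp_aemeasurable hXm).pow_const n).restrict).aestronglyMeasurable
    have hFint : Integrable (fun ω => (u (X ω)) ^ n) (μ.restrict S) := by
      apply Integrable.mono' hGint hFasm
      refine ae_of_all _ fun ω => ?_
      rw [Real.norm_eq_abs, abs_pow, hne.pow_abs]
      exact hpt ω
    have hmono := integral_mono hFint hGint (fun ω => hpt ω)
    have hGval : ∫ ω in S, (B ^ n + |X ω| ^ n) ∂μ
        = B ^ n * R + ∫ ω in S, |X ω| ^ n ∂μ := by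
      rw [integral_add (integrable_const _) ((hXint_absn n).restrict), integral_const,
        measureReal_restrict_apply_univ, measureReal_def, hμS, ENNReal.toReal_ofReal hRpos.le, smul_eq_mul, mul_comm]
    have hSle : ∫ ω in S, |X ω| ^ n ∂μ ≤ ∫ ω, |X ω| ^ n ∂μ :=
      setIntegral_le_integral (hXint_absn n) (ae_of_all _ fun ω => by positivity)
    have hEy : ∫ y, y ^ n ∂(gaussianReal 0 1) = ∫ y, |y| ^ n ∂(gaussianReal 0 1) :=
      integral_congr_ae (ae_of_all _ fun y => (hne.pow_abs y).symm)
    calc R⁻¹ * ∫ ω in S, (u (X ω)) ^ n ∂μ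
        ≤ R⁻¹ * (B ^ n * R + ∫ ω, |X ω| ^ n ∂μ) := by
          apply mul_le_mul_of_nonneg_left ?_ (inv_nonneg.mpr hRpos.le)
          calc ∫ ω in S, (u (X ω)) ^ n ∂μ ≤ ∫ ω in S, (B ^ n + |X ω| ^ n) ∂μ := hmono
            _ = B ^ n * R + ∫ ω in S, |X ω| ^ n ∂μ := hGval
            _ ≤ B ^ n * R + ∫ ω, |X ω| ^ n ∂μ := by linarith
      _ = B ^ n + (1 / R) * ∫ ω, |X ω| ^ n ∂μ := by
          field_simp
      _ = B ^ n + (1 / R) * ∫ y, y ^ n ∂(gaussianReal 0 1) := by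
          rw [hXintegral n, hEy]
  · -- Part 2
    set C1 : ℝ := max 1 R⁻¹ with hC1_def
    have hC1 : (1:ℝ) ≤ C1 := le_max_left _ _
    have hRC : R⁻¹ ≤ C1 := le_max_right _ _
    clear_value C1
    refine ⟨2 * C1 * B + 4 * C1, by nlinarith, ?_⟩
    intro n hn1
    have hnz : n ≠ 0 := by omega
    have hsn1 : (1:ℝ) ≤ Real.sqrt n := by
      rw [show (1:ℝ) = Real.sqrt 1 by simp]
      exact Real.sqrt_le_sqrt (by exact_mod_cast hn1)
    have hsn0 : (0:ℝ) ≤ Real.sqrt n := Real.sqrt_nonneg _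
    set Kp : ℝ := 2 * C1 * B + 4 * C1 with hK_def
    have hKpos : 0 < Kp := by nlinarith
    clear_value Kp
    show (∫ ω, (u (X ω)) ^ n ∂(ProbabilityTheory.cond μ S)) ^ ((1:ℝ)/n)
        ≤ Kp * Real.sqrt n
    have hval : ∫ ω, (u (X ω)) ^ n ∂(ProbabilityTheory.cond μ S)
        = R⁻¹ * ∫ ω in S, (u (X ω)) ^ n ∂μ := by
      rw [hcondS, integral_smul_measure, htoReal, smul_eq_mul]
    -- bound the set integral in absolute value
    have hptabs : ∀ ω, |u (X ω)| ^ n ≤ (B + |X ω|) ^ n := fun ω =>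
      pow_le_pow_left₀ (abs_nonneg _) (hBB ▸ u_abs_le hlam (X ω)) n
    have hJint : Integrable (fun ω => |u (X ω)| ^ n) (μ.restrict S) := by
      apply Integrable.mono' ((hdom n).restrict)
        ((((measurable_abs.comp_aemeasurable (hu_meas.comp_aemeasurable hXm)).pow_const
          n).restrict).aestronglyMeasurable)
      refine ae_of_all _ fun ω => ?_
      rw [Real.norm_eq_abs, abs_of_nonneg (pow_nonneg (abs_nonneg _) n)]
      exact hptabs ω
    have habs : |∫ ω in S, (u (X ω)) ^ n ∂μ| ≤ ∫ ω in S, |u (X ω)| ^ n ∂μ := by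
      have h := norm_integral_le_integral_norm (f := fun ω => (u (X ω)) ^ n) (μ := μ.restrict S)
      simpa [Real.norm_eq_abs, abs_pow] using h
    have hchain : ∫ ω in S, |u (X ω)| ^ n ∂μ
        ≤ 2 ^ n * B ^ n + 2 ^ n * (2 * Real.sqrt n ^ n) := by
      calc ∫ ω in S, |u (X ω)| ^ n ∂μ
          ≤ ∫ ω in S, (B + |X ω|) ^ n ∂μ :=
            integral_mono hJint ((hdom n).restrict) (fun ω => hptabs ω)
        _ ≤ ∫ ω, (B + |X ω|) ^ n ∂μ :=
            setIntegral_le_integral (hdom n) (ae_of_all _ fun ω => by positivity)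
        _ ≤ 2 ^ n * B ^ n + 2 ^ n * (2 * Real.sqrt n ^ n) := hdomint n
    -- arithmetic
    have harith : R⁻¹ * (2 ^ n * B ^ n + 2 ^ n * (2 * Real.sqrt n ^ n))
        ≤ (Kp * Real.sqrt n) ^ n := by
      have t1 : R⁻¹ * (2 ^ n * B ^ n) ≤ (2 * C1 * B) ^ n := by
        have hc : R⁻¹ ≤ C1 ^ n := hRC.trans (le_self_pow₀ hC1 hnz)
        have : (2 * C1 * B) ^ n = C1 ^ n * (2 ^ n * B ^ n) := by ring
        rw [this]
        apply mul_le_mul_of_nonneg_right hc (by positivity)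
      have t2 : R⁻¹ * (2 ^ n * (2 * Real.sqrt n ^ n)) ≤ (4 * C1 * Real.sqrt n) ^ n := by
        have h2c : 2 * C1 ≤ (2 * C1) ^ n := le_self_pow₀ (by linarith) hnz
        have expand : (4 * C1 * Real.sqrt n) ^ n
            = ((2 * C1) ^ n * 2 ^ n) * Real.sqrt n ^ n := by
          rw [show (4 : ℝ) * C1 * Real.sqrt n = (2 * C1) * (2 * Real.sqrt n) by ring,
            mul_pow, mul_pow]
          ring
        rw [expand]
        have lhs_eq : R⁻¹ * (2 ^ n * (2 * Real.sqrt n ^ n))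
            = (R⁻¹ * 2 * 2 ^ n) * Real.sqrt n ^ n := by ring
        rw [lhs_eq]
        apply mul_le_mul_of_nonneg_right ?_ (by positivity)
        calc R⁻¹ * 2 * 2 ^ n ≤ (2 * C1) * 2 ^ n := by nlinarith [pow_pos (show (0:ℝ) < 2 by norm_num) n]
          _ ≤ (2 * C1) ^ n * 2 ^ n := by
              apply mul_le_mul_of_nonneg_right h2c (by positivity)
      have t3 : (2 * C1 * B) ^ n + (4 * C1 * Real.sqrt n) ^ n
          ≤ (2 * C1 * B + 4 * C1 * Real.sqrt n) ^ n :=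
        pow_add_pow_le (by positivity) (by positivity) hnz
      have t4 : (2 * C1 * B + 4 * C1 * Real.sqrt n) ^ n ≤ (Kp * Real.sqrt n) ^ n := by
        apply pow_le_pow_left₀ (by positivity)
        rw [hK_def]
        have hterm : 0 ≤ (2 * C1 * B) * (Real.sqrt n - 1) :=
          mul_nonneg (by positivity) (by linarith)
        nlinarith
      have hsum : R⁻¹ * (2 ^ n * B ^ n + 2 ^ n * (2 * Real.sqrt n ^ n))
          = R⁻¹ * (2 ^ n * B ^ n) + R⁻¹ * (2 ^ n * (2 * Real.sqrt n ^ n)) := by ring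
      rw [hsum]
      linarith
    apply rpow_one_div_le hn1 (by positivity)
    rw [hval, abs_mul, abs_of_nonneg (inv_nonneg.mpr hRpos.le)]
    calc R⁻¹ * |∫ ω in S, (u (X ω)) ^ n ∂μ|
        ≤ R⁻¹ * (2 ^ n * B ^ n + 2 ^ n * (2 * Real.sqrt n ^ n)) := by
          apply mul_le_mul_of_nonneg_left (habs.trans hchain) (inv_nonneg.mpr hRpos.le)
      _ ≤ (Kp * Real.sqrt n) ^ n := harith
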